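/- Let R be a commutative ring and let Ω₁ and Ω₂ be ℕ-graded-commutative unital R-algebras. Let Φ : Ω₂ → Ω₁ be a grade-preserving R-algebra homomorphism, let d₁ : Ω₁ → Ω₁ be a graded derivation of degree +1, and let d₂ : Ω₂ → Ω₂ be a degree +1 R-linear map. On the tensor product Ω₁ ⊗_R Ω₂ define ᴱd(ω₁ ⊗ ω₂) := (d₁ω₁) ⊗ ω₂ + (−1)^q ω₁ ⊗ (d₂ω₂) for ω₁ homogeneous of degree q, and define Φ^gra : Ω₁ ⊗_R Ω₂ → Ω₁ by Φ^gra(ω₁ ⊗ ω₂) := ω₁ · Φ(ω₂). Then for all homogeneous ω₁ ∈ Ω₁ of degree q and all ω₂ ∈ Ω₂: (d₁ ∘ Φ^gra − Φ^gra ∘ ᴱd)(ω₁ ⊗ ω₂) = (−1)^q ω₁ · ((d₁∘Φ − Φ∘d₂)(ω₂)). Consequently Φ^gra is a chain map (d₁ ∘ Φ^gra = Φ^gra ∘ ᴱd) if and only if Φ is a chain map (d₁ ∘ Φ = Φ ∘ d₂). -/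

import Mathlib

/-- Let `Ω₁`, `Ω₂` be ℕ-graded-commutative unital `R`-algebras,
`Φ : Ω₂ → Ω₁` a grade-preserving `R`-algebra homomorphism, `d₁` a graded derivation
of degree `+1` on `Ω₁`, and `d₂ : Ω₂ → Ω₂` a degree `+1` `R`-linear map. On the
tensor product, the total differential is `ᴱd(ω₁ ⊗ ω₂) = (d₁ω₁) ⊗ ω₂ + (−1)^q ω₁ ⊗
(d₂ω₂)` for `ω₁` of degree `q`, and the graph map is `Φᵍʳᵃ(ω₁ ⊗ ω₂) = ω₁ · Φ(ω₂)`.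
Then `(d₁ ∘ Φᵍʳᵃ − Φᵍʳᵃ ∘ ᴱd)(ω₁ ⊗ ω₂) = (−1)^q ω₁ · ((d₁∘Φ − Φ∘d₂)(ω₂))`;
consequently `Φᵍʳᵃ` is a chain map iff `Φ` is a chain map. -/
theorem graph_is_chain_map_iff_morphism
    {R Ω₁ Ω₂ : Type*} [CommRing R]
    [Ring Ω₁] [Algebra R Ω₁] [Ring Ω₂] [Algebra R Ω₂]
    (𝒜₁ : ℕ → Submodule R Ω₁) (𝒜₂ : ℕ → Submodule R Ω₂)
    [GradedAlgebra 𝒜₁] [GradedAlgebra 𝒜₂]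
    -- graded commutativity of Ω₁ and Ω₂
    (hcomm₁ : ∀ (p q : ℕ) (x y : Ω₁), x ∈ 𝒜₁ p → y ∈ 𝒜₁ q →
      x * y = ((-1 : ℤ) ^ (p * q)) • (y * x))
    (hcomm₂ : ∀ (p q : ℕ) (x y : Ω₂), x ∈ 𝒜₂ p → y ∈ 𝒜₂ q →
      x * y = ((-1 : ℤ) ^ (p * q)) • (y * x))
    -- Φ is a grade-preserving R-algebra homomorphism
    (Φ : Ω₂ →ₐ[R] Ω₁)
    (hΦ : ∀ (p : ℕ) (x : Ω₂), x ∈ 𝒜₂ p → Φ x ∈ 𝒜₁ p)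
    -- d₁ is a graded derivation of degree +1 on Ω₁
    (d₁ : Ω₁ →ₗ[R] Ω₁)
    (hd₁deg : ∀ (p : ℕ) (x : Ω₁), x ∈ 𝒜₁ p → d₁ x ∈ 𝒜₁ (p + 1))
    (hd₁leib : ∀ (p : ℕ) (x y : Ω₁), x ∈ 𝒜₁ p →
      d₁ (x * y) = d₁ x * y + ((-1 : ℤ) ^ p) • (x * d₁ y))
    -- d₂ is a degree +1 R-linear map on Ω₂
    (d₂ : Ω₂ →ₗ[R] Ω₂)
    (hd₂deg : ∀ (p : ℕ) (x : Ω₂), x ∈ 𝒜₂ p → d₂ x ∈ 𝒜₂ (p + 1)) :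
    -- the basic identity relating (d₁∘Φᵍʳᵃ − Φᵍʳᵃ∘ᴱd)(ω₁ ⊗ ω₂) to (d₁∘Φ − Φ∘d₂)(ω₂)
    (∀ (q : ℕ) (ω₁ : Ω₁), ω₁ ∈ 𝒜₁ q → ∀ ω₂ : Ω₂,
        d₁ (ω₁ * Φ ω₂)
            - (d₁ ω₁ * Φ ω₂ + ((-1 : ℤ) ^ q) • (ω₁ * Φ (d₂ ω₂)))
          = ((-1 : ℤ) ^ q) • (ω₁ * (d₁ (Φ ω₂) - Φ (d₂ ω₂)))) ∧
    -- consequently, Φᵍʳᵃ is a chain map iff Φ is a chain map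
    ((∀ (q : ℕ) (ω₁ : Ω₁), ω₁ ∈ 𝒜₁ q → ∀ ω₂ : Ω₂,
        d₁ (ω₁ * Φ ω₂)
          = d₁ ω₁ * Φ ω₂ + ((-1 : ℤ) ^ q) • (ω₁ * Φ (d₂ ω₂))) ↔
      (∀ ω₂ : Ω₂, d₁ (Φ ω₂) = Φ (d₂ ω₂))) := by

  have key : ∀ (q : ℕ) (ω₁ : Ω₁), ω₁ ∈ 𝒜₁ q → ∀ ω₂ : Ω₂,
      d₁ (ω₁ * Φ ω₂)
          - (d₁ ω₁ * Φ ω₂ + ((-1 : ℤ) ^ q) • (ω₁ * Φ (d₂ ω₂)))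
        = ((-1 : ℤ) ^ q) • (ω₁ * (d₁ (Φ ω₂) - Φ (d₂ ω₂))) := by
    intro q ω₁ hω₁ ω₂
    rw [hd₁leib q ω₁ (Φ ω₂) hω₁, mul_sub, smul_sub]
    abel
  refine ⟨key, ?_, ?_⟩
  · intro h ω₂
    have h1 : (1 : Ω₁) ∈ 𝒜₁ 0 := SetLike.one_mem_graded 𝒜₁
    have hd1 : d₁ 1 = 0 := by
      have := hd₁leib 0 1 1 h1
      simp only [mul_one, one_mul, pow_zero, one_smul] at this
      exact left_eq_add.mp this
    have := h 0 1 h1 ω₂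
    simpa [hd1] using this
  · intro h q ω₁ hω₁ ω₂
    have := key q ω₁ hω₁ ω₂
    rw [h ω₂] at this
    simp only [sub_self, mul_zero, smul_zero] at this
    exact sub_eq_zero.mp this
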